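/- Let K ⊂ ℝ^q be a compact convex set and let D : ℝ^q ⇒ ℝ^q be a set-valued map with closed graph that is locally bounded. For every ε > 0 there exists δ > 0 such that every point w ∈ K satisfying 0 ∈ D^δ(w) + N_K(w) lies within distance ε of the set {w ∈ K : 0 ∈ D(w) + N_K(w)}, where D^δ denotes the δ-enlargement of D and N_K(w) is the normal cone to K at w. -/

import Mathlib

open Set Filter Topology Pointwise

/-- The graph of a set-valued map `D : E ⇒ E`. -/
def svGraph {E : Type*} (D : E → Set E) : Set (E × E) := {p | p.2 ∈ D p.1}

/-- Local boundedness of a set-valued map. -/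
def LocallyBoundedSV {E : Type*} [NormedAddCommGroup E] (D : E → Set E) : Prop :=
  ∀ w : E, ∃ U ∈ nhds w, Bornology.IsBounded (⋃ x ∈ U, D x)

/-- The δ-enlargement of a set-valued map. -/
def enlarge {E : Type*} [NormedAddCommGroup E] (D : E → Set E) (δ : ℝ) (w : E) : Set E :=
  {v | ∃ v' w', v' ∈ D w' ∧ ‖v - v'‖ ≤ δ ∧ ‖w - w'‖ ≤ δ}

/-- The normal cone to a convex set `K` at `w`. -/
def normalCone {E : Type*} [NormedAddCommGroup E] [InnerProductSpace ℝ E]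
    (K : Set E) (w : E) : Set E :=
  {u | ∀ x ∈ K, inner ℝ u (x - w) ≤ (0 : ℝ)}

theorem stmt0 {q : ℕ} (K : Set (EuclideanSpace ℝ (Fin q)))
    (hKcomp : IsCompact K) (hKconv : Convex ℝ K)
    (D : EuclideanSpace ℝ (Fin q) → Set (EuclideanSpace ℝ (Fin q)))
    (hclosed : IsClosed (svGraph D)) (hbdd : LocallyBoundedSV D)
    (ε : ℝ) (hε : 0 < ε) :
    ∃ δ > (0 : ℝ), ∀ w ∈ K, (0 : EuclideanSpace ℝ (Fin q)) ∈ enlarge D δ w + normalCone K w →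
      ∃ w', (w' ∈ K ∧ (0 : EuclideanSpace ℝ (Fin q)) ∈ D w' + normalCone K w') ∧
        ‖w - w'‖ ≤ ε := by
  by_contra hcon
  push_neg at hcon
  let E := EuclideanSpace ℝ (Fin q)
  have h : ∀ n : ℕ, ∃ w ∈ K,
      (0 : E) ∈ enlarge D (1/(n+1)) w + normalCone K w ∧
      ∀ w', (w' ∈ K ∧ (0 : E) ∈ D w' + normalCone K w') → ε < ‖w - w'‖ := by
    intro n
    obtain ⟨w, hwK, hmem, hfar⟩ := hcon (1/(n+1)) (by positivity)
    exact ⟨w, hwK, hmem, hfar⟩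
  choose W hWK hmem hfar using h
  have h2 : ∀ n : ℕ, ∃ v v' w', v' ∈ D w' ∧ ‖v - v'‖ ≤ 1/(n+1) ∧ ‖W n - w'‖ ≤ 1/(n+1) ∧
      -v ∈ normalCone K (W n) := by
    intro n
    obtain ⟨a, ha, b, hb, hab⟩ := Set.mem_add.mp (hmem n)
    obtain ⟨v', w', hv', hav, haw⟩ := ha
    refine ⟨a, v', w', hv', hav, haw, ?_⟩
    have : b = -a := eq_neg_of_add_eq_zero_right hab
    rwa [this] at hb
  choose V V' W' hD hVV' hWW' hNC using h2
  obtain ⟨x, hxK, φ, hφ, hWφ⟩ := hKcomp.tendsto_subseq hWK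
  obtain ⟨U, hU, hUb⟩ := hbdd x
  obtain ⟨R, hR⟩ := hUb.subset_closedBall 0
  have hinv : Tendsto (fun n : ℕ => (1:ℝ)/(n+1)) atTop (𝓝 0) := by
    simpa using (tendsto_one_div_add_atTop_nhds_zero_nat : Tendsto (fun n : ℕ => 1 / ((n : ℝ) + 1)) atTop (𝓝 0))
  have hσle : ∀ (σ : ℕ → ℕ), StrictMono σ →
      Tendsto (fun n : ℕ => (1:ℝ)/(σ n+1)) atTop (𝓝 0) := by
    intro σ hσ
    refine squeeze_zero (fun n => by positivity) (fun n => ?_) hinv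
    have := hσ.id_le n
    gcongr
    exact_mod_cast this
  have hclose : ∀ (σ : ℕ → ℕ), StrictMono σ → ∀ (A B : ℕ → E) (y : E),
      (∀ n, ‖A n - B n‖ ≤ 1/(n+1)) → Tendsto (fun n => A (σ n)) atTop (𝓝 y) →
      Tendsto (fun n => B (σ n)) atTop (𝓝 y) := by
    intro σ hσ A B y hAB hA
    rw [tendsto_iff_dist_tendsto_zero] at hA ⊢
    refine squeeze_zero (fun n => dist_nonneg) (fun n => ?_) ((zero_add (0:ℝ)) ▸ (hσle σ hσ).add hA)
    calc dist (B (σ n)) y ≤ dist (B (σ n)) (A (σ n)) + dist (A (σ n)) y := dist_triangle _ _ _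
      _ ≤ 1/(σ n+1) + dist (A (σ n)) y := by
          gcongr
          rw [dist_comm, dist_eq_norm]; exact hAB (σ n)
  have hW'φ : Tendsto (fun n => W' (φ n)) atTop (𝓝 x) := hclose φ hφ W W' x hWW' hWφ
  have hev : ∀ᶠ n in atTop, W' (φ n) ∈ U := hW'φ.eventually_mem hU
  obtain ⟨N, hN⟩ := eventually_atTop.mp hev
  have hVball : ∀ n : ℕ, V' (φ (n + N)) ∈ Metric.closedBall (0 : E) R := by
    intro n
    apply hR
    exact Set.mem_biUnion (hN (n + N) (Nat.le_add_left N n)) (hD (φ (n + N)))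
  obtain ⟨v, hvball, ψ, hψ, hVψ⟩ :=
    (isCompact_closedBall (0 : E) R).tendsto_subseq hVball
  set σ : ℕ → ℕ := fun n => φ (ψ n + N) with hσdef
  have hσmono : StrictMono σ := hφ.comp fun a b hab => by
    have := hψ hab; omega
  have hWσ : Tendsto (fun n => W (σ n)) atTop (𝓝 x) :=
    hWφ.comp ((hψ.add_const N).tendsto_atTop)
  have hV'σ : Tendsto (fun n => V' (σ n)) atTop (𝓝 v) := hVψ
  have hW'σ : Tendsto (fun n => W' (σ n)) atTop (𝓝 x) :=
    hW'φ.comp ((hψ.add_const N).tendsto_atTop)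
  have hVσ : Tendsto (fun n => V (σ n)) atTop (𝓝 v) :=
    hclose σ hσmono V' V v (fun n => by rw [norm_sub_rev]; exact hVV' n) hV'σ
  -- closed graph
  have hvDx : v ∈ D x := by
    have : (x, v) ∈ svGraph D := by
      have htp : Tendsto (fun n => (W' (σ n), V' (σ n))) atTop (𝓝 (x, v)) :=
        hW'σ.prodMk_nhds hV'σ
      exact hclosed.mem_of_tendsto htp (Eventually.of_forall fun n => hD (σ n))
    exact this
  -- normal cone limit
  have hnvNC : -v ∈ normalCone K x := by
    intro y hy
    have ht : Tendsto (fun n => (inner ℝ (-(V (σ n))) (y - W (σ n)) : ℝ)) atTop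
        (𝓝 (inner ℝ (-v) (y - x))) :=
      (hVσ.neg).inner (tendsto_const_nhds.sub hWσ)
    exact le_of_tendsto ht (Eventually.of_forall fun n => hNC (σ n) y hy)
  have hzero : (0 : E) ∈ D x + normalCone K x :=
    Set.mem_add.mpr ⟨v, hvDx, -v, hnvNC, by simp⟩
  have hevε : ∀ᶠ n in atTop, ‖W (σ n) - x‖ < ε := by
    have := hWσ.eventually_mem (Metric.ball_mem_nhds x hε)
    filter_upwards [this] with n hn
    rw [← dist_eq_norm]; exact hn
  obtain ⟨n, hn⟩ := hevε.exists
  exact absurd (hfar (σ n) x ⟨hxK, hzero⟩) (not_lt.mpr hn.le)
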